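/- Let ((Aₙ),(Ψₙ)) be a factorable weak operator-valued frame in B(H,H₀). Then the range of the analysis operator θ_A is a closed subspace of ℓ²(ℕ,H₀). -/

import Mathlib

noncomputable section

open ContinuousLinearMap Filter

variable {H H₀ : Type*} [NormedAddCommGroup H] [InnerProductSpace ℂ H] [CompleteSpace H]
  [NormedAddCommGroup H₀] [InnerProductSpace ℂ H₀] [CompleteSpace H₀]

/-- `ℓ²(I, H₀)`: square-summable `H₀`-valued families indexed by `I`. -/
abbrev l2 (I : Type*) (H₀ : Type*) [NormedAddCommGroup H₀] : Type _ :=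
  lp (fun _ : I => H₀) 2

/-- The isometry `Lᵢ : H₀ → ℓ²(I,H₀)` sending `h` to the family equal to `h` at index `i`
and `0` elsewhere. -/
def Lop {I : Type*} [DecidableEq I] (i : I) : H₀ →L[ℂ] l2 I H₀ :=
  LinearMap.mkContinuous
    { toFun := fun h => lp.single 2 i h
      map_add' := by
        intro a b
        apply lp.ext
        funext j
        by_cases hj : j = i
        · subst hj; simp [lp.single_apply_self]
        · simp [lp.single_apply_ne _ _ _ hj, lp.coeFn_add]
      map_smul' := by
        intro c a
        simp [lp.single_smul] }
    1
    (by
      intro h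
      simpa using (lp.norm_single (p := 2) (by norm_num) (fun _ : I => h) i).le)

/-- Convergence of the sequence of partial sums `∑_{n < m} f n` to `x` as `m → ∞`. -/
def SeqSum {E : Type*} [AddCommMonoid E] [TopologicalSpace E] (f : ℕ → E) (x : E) : Prop :=
  Tendsto (fun m => ∑ n ∈ Finset.range m, f n) atTop (nhds x)

/-- The range of the analysis operator of a factorable weak OVF is closed. -/
theorem stmt4
    (A Ψ : ℕ → H →L[ℂ] H₀) (S T : H →L[ℂ] H)
    (hS : ∀ h : H, SeqSum (fun n => adjoint (Ψ n) (A n h)) (S h))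
    (hST : S ∘L T = 1) (hTS : T ∘L S = 1)
    (θA θΨ : H →L[ℂ] l2 ℕ H₀)
    (hθA : ∀ h : H, SeqSum (fun n => Lop n (A n h)) (θA h))
    (hθΨ : ∀ h : H, SeqSum (fun n => Lop n (Ψ n h)) (θΨ h)) :
    IsClosed (Set.range θA) := by
  classical
  -- coordinates of θ
  have coord : ∀ (B : ℕ → H →L[ℂ] H₀) (θ : H →L[ℂ] l2 ℕ H₀),
      (∀ h : H, SeqSum (fun n => Lop n (B n h)) (θ h)) →
      ∀ (h : H) (k : ℕ), (θ h : ∀ _ : ℕ, H₀) k = B k h := by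
    intro B θ hθ h k
    have h1 : Tendsto (fun m => ((∑ n ∈ Finset.range m, Lop n (B n h) : l2 ℕ H₀) :
        ∀ _ : ℕ, H₀) k) atTop (nhds ((θ h : ∀ _ : ℕ, H₀) k)) := by
      have h2 := hθ h
      rw [SeqSum] at h2
      have h3 : Tendsto (fun m => ‖(∑ n ∈ Finset.range m, Lop n (B n h) : l2 ℕ H₀) - θ h‖)
          atTop (nhds 0) := by
        simpa using (tendsto_iff_norm_sub_tendsto_zero.mp h2)
      rw [tendsto_iff_norm_sub_tendsto_zero]
      refine squeeze_zero (fun m => norm_nonneg _) (fun m => ?_) h3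
      have := lp.norm_apply_le_norm (p := 2) (by norm_num)
        ((∑ n ∈ Finset.range m, Lop n (B n h) : l2 ℕ H₀) - θ h) k
      simpa [lp.coeFn_sub] using this
    have h4 : Tendsto (fun m => ((∑ n ∈ Finset.range m, Lop n (B n h) : l2 ℕ H₀) :
        ∀ _ : ℕ, H₀) k) atTop (nhds (B k h)) := by
      apply Tendsto.congr' (f₁ := fun _ => B k h)
      · filter_upwards [eventually_ge_atTop (k + 1)] with m hm
        have hsum : ((∑ n ∈ Finset.range m, Lop n (B n h) : l2 ℕ H₀) : ∀ _ : ℕ, H₀) k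
            = ∑ n ∈ Finset.range m, ((Lop n (B n h) : l2 ℕ H₀) : ∀ _ : ℕ, H₀) k := by
          rw [lp.coeFn_sum]; simp
        rw [hsum]
        have hk : k ∈ Finset.range m := Finset.mem_range.mpr (by omega)
        have hcoord : ∀ n, ((Lop n (B n h) : l2 ℕ H₀) : ∀ _ : ℕ, H₀) k
            = if k = n then B n h else 0 := by
          intro n
          simp [Lop, LinearMap.mkContinuous_apply, lp.single_apply, Pi.single_apply]
        rw [Finset.sum_congr rfl (fun n _ => hcoord n)]
        simp [hk]
      · exact tendsto_const_nhds
    exact tendsto_nhds_unique h1 h4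
  -- factorization S = (adjoint θΨ) ∘ θA
  have hfact : ∀ h : H, adjoint θΨ (θA h) = S h := by
    intro h
    apply ext_inner_right ℂ
    intro g
    rw [adjoint_inner_left]
    have h1 : HasSum (fun n => (inner ℂ ((θA h : ∀ _ : ℕ, H₀) n) ((θΨ g : ∀ _ : ℕ, H₀) n) : ℂ))
        (inner ℂ (θA h) (θΨ g)) := lp.hasSum_inner (θA h) (θΨ g)
    have h2 : Tendsto (fun m => ∑ n ∈ Finset.range m,
        (inner ℂ ((θA h : ∀ _ : ℕ, H₀) n) ((θΨ g : ∀ _ : ℕ, H₀) n) : ℂ)) atTop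
        (nhds (inner ℂ (θA h) (θΨ g))) := h1.tendsto_sum_nat
    have h3 : Tendsto (fun m => (inner ℂ (∑ n ∈ Finset.range m, adjoint (Ψ n) (A n h)) g : ℂ))
        atTop (nhds (inner ℂ (S h) g)) :=
      ((continuous_id.inner continuous_const).tendsto _).comp (hS h)
    have h4 : ∀ m, (inner ℂ (∑ n ∈ Finset.range m, adjoint (Ψ n) (A n h)) g : ℂ)
        = ∑ n ∈ Finset.range m,
          (inner ℂ ((θA h : ∀ _ : ℕ, H₀) n) ((θΨ g : ∀ _ : ℕ, H₀) n) : ℂ) := by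
      intro m
      rw [sum_inner]
      refine Finset.sum_congr rfl (fun n _ => ?_)
      rw [adjoint_inner_left, coord A θA hθA h n, coord Ψ θΨ hθΨ g n]
    exact tendsto_nhds_unique h2 (h3.congr h4)
  -- left inverse
  set L : l2 ℕ H₀ →L[ℂ] H := T ∘L adjoint θΨ with hL
  have hLθ : ∀ h : H, L (θA h) = h := by
    intro h
    have : L (θA h) = T (S h) := by rw [hL]; simp [hfact h]
    rw [this]
    have := congrFun (congrArg (fun (f : H →L[ℂ] H) => (f : H → H)) hTS) h
    simpa using this
  -- range = fixed point set of θA ∘ L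
  have hrange : Set.range θA = {x : l2 ℕ H₀ | (θA ∘L L) x = x} := by
    ext x
    constructor
    · rintro ⟨h, rfl⟩
      simp [hLθ h]
    · intro hx
      exact ⟨L x, hx⟩
  rw [hrange]
  exact isClosed_eq (θA ∘L L).continuous continuous_id
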